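/- Let G be a second countable locally compact group with Haar measure μ, and let (V₀, V₁) be a pair of disjoint open subsets of G such that there is a maximal n for which one can find g₀,…,g_{n-1} ∈ G and points (x_η : η ∈ {0,1}^n) in G with g_k · x_η ∈ V_{η(k)} for all k < n and all η (a 'tame pair'). Then μ(cl(V₀) ∩ cl(V₁)) = 0. -/

import Mathlib

open MeasureTheory Set Pointwise Topology

/-- For a tame pair `(V₀, V₁)` of disjoint open sets in a second countable
locally compact group with Haar measure `μ`, the set `closure V₀ ∩ closure V₁` is `μ`-null. -/
theorem tame_pair_closure_inter_null
    {G : Type*} [Group G] [TopologicalSpace G] [IsTopologicalGroup G] [T2Space G]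
    [LocallyCompactSpace G] [SecondCountableTopology G]
    [MeasurableSpace G] [BorelSpace G]
    (μ : Measure G) [μ.IsHaarMeasure]
    (V₀ V₁ : Set G) (hV₀ : IsOpen V₀) (hV₁ : IsOpen V₁) (hdisj : Disjoint V₀ V₁)
    (htame : ∃ N : ℕ, ∀ (n : ℕ) (g : Fin n → G) (x : (Fin n → Fin 2) → G),
      (∀ (k : Fin n) (η : Fin n → Fin 2),
        g k * x η ∈ (if η k = 0 then V₀ else V₁)) → n ≤ N) :
    μ (closure V₀ ∩ closure V₁) = 0 := by
  classical
  obtain ⟨N, hN⟩ := htame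
  by_contra hne
  set F : Set G := closure V₀ ∩ closure V₁ with hF
  obtain ⟨z, hzF⟩ : F.Nonempty := nonempty_of_measure_ne_zero hne
  obtain ⟨Bas, hBasc, -, hBas⟩ := TopologicalSpace.exists_countable_basis G
  -- the target sets, indexed by `Fin 2`
  set W : Fin 2 → Set G := fun i => if i = 0 then V₀ else V₁ with hW
  have hWopen : ∀ i, IsOpen (W i) := by
    intro i; simp only [hW]; split <;> [exact hV₀; exact hV₁]
  have hFW : ∀ i, F ⊆ closure (W i) := by
    intro i; simp only [hW]; split <;> [exact inter_subset_left; exact inter_subset_right]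
  -- Key null lemma
  have key : ∀ (Q : Set G), IsOpen Q → z ∈ closure Q → ∀ (i : Fin 2), ∀ b ∈ Bas, z ∈ b →
      μ {f | f ∈ F ∧ ∀ q ∈ Q ∩ b, f * z⁻¹ * q ∉ W i} = 0 := by
    intro Q hQ hzQ i b hbB hzb
    have hbopen : IsOpen b := hBas.isOpen hbB
    set Bad : Set G := ⋃ q ∈ Q ∩ b, (fun f => f * z⁻¹ * q) ⁻¹' (W i) with hBad
    have hBadOpen : IsOpen Bad := isOpen_biUnion fun q _ =>
      (hWopen i).preimage ((continuous_mul_right q).comp (continuous_mul_right z⁻¹))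
    set B : Set G := F ∩ Badᶜ with hB
    have hBiff : ∀ f, f ∈ B ↔ (f ∈ F ∧ ∀ q ∈ Q ∩ b, f * z⁻¹ * q ∉ W i) := by
      intro f
      constructor
      · rintro ⟨hfF, hfBad⟩
        exact ⟨hfF, fun q hq hqW => hfBad (mem_biUnion hq hqW)⟩
      · rintro ⟨hfF, hall⟩
        refine ⟨hfF, fun hbad => ?_⟩
        obtain ⟨q, hq, hqW⟩ := mem_iUnion₂.1 hbad
        exact hall q hq hqW
    have hBeq : {f | f ∈ F ∧ ∀ q ∈ Q ∩ b, f * z⁻¹ * q ∉ W i} = B := by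
      ext f; rw [hBiff f]; rfl
    rw [hBeq]
    have hBmeas : MeasurableSet B :=
      ((isClosed_closure.inter isClosed_closure).measurableSet).inter
        hBadOpen.measurableSet.compl
    by_contra h0
    -- Steinhaus
    have hSt : B⁻¹ / B⁻¹ ∈ 𝓝 (1 : G) := by
      have h1 : μ B⁻¹ ≠ 0 := fun h => h0 ((measure_inv_null μ).1 h)
      exact Measure.div_mem_nhds_one_of_haar_pos μ B⁻¹ hBmeas.inv (pos_iff_ne_zero.2 h1)
    -- pull back along `q ↦ z⁻¹ * q` at `q = z`
    have hcont : ContinuousAt (fun q : G => z⁻¹ * q) z := (continuous_mul_left z⁻¹).continuousAt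
    have hnz : (fun q : G => z⁻¹ * q) ⁻¹' (B⁻¹ / B⁻¹) ∈ 𝓝 z := by
      apply hcont.preimage_mem_nhds
      simpa using hSt
    obtain ⟨O, hOsub, hOopen, hzO⟩ := mem_nhds_iff.1 hnz
    -- find `q ∈ Q` inside the open set `O ∩ b`
    obtain ⟨q, hqOb, hqQ⟩ := mem_closure_iff.1 hzQ (O ∩ b) (hOopen.inter hbopen) ⟨hzO, hzb⟩
    have hq2 : z⁻¹ * q ∈ B⁻¹ / B⁻¹ := hOsub hqOb.1
    obtain ⟨u, hu, v, hv, huv⟩ := hq2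
    have huv' : u / v = z⁻¹ * q := huv
    have hb₁B : u⁻¹ ∈ B := hu
    have hb₂B : v⁻¹ ∈ B := hv
    have hrel : u⁻¹ * (z⁻¹ * q) = v⁻¹ := by
      rw [← huv', div_eq_mul_inv, inv_mul_cancel_left]
    -- the open window around `v⁻¹`
    have hwin_open : IsOpen ((u⁻¹ * z⁻¹) • (Q ∩ b)) := (hQ.inter hbopen).smul _
    have hb₂win : v⁻¹ ∈ (u⁻¹ * z⁻¹) • (Q ∩ b) := by
      refine ⟨q, ⟨hqQ, hqOb.2⟩, ?_⟩
      simp only [smul_eq_mul]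
      rw [mul_assoc, hrel]
    have hb₂cl : v⁻¹ ∈ closure (W i) := hFW i ((hBiff _).1 hb₂B).1
    obtain ⟨y, hywin, hyW⟩ := mem_closure_iff.1 hb₂cl _ hwin_open hb₂win
    obtain ⟨q', hq', hq'y⟩ := hywin
    refine ((hBiff _).1 hb₁B).2 q' hq' ?_
    have hy : u⁻¹ * z⁻¹ * q' = y := hq'y
    rwa [hy]
  -- main induction : shattering configurations of every size
  have main : ∀ n : ℕ, ∃ g : Fin n → G, ∀ η : Fin n → Fin 2,
      z ∈ closure (⋂ k, (fun y => g k * y) ⁻¹' W (η k)) := by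
    intro n
    induction n with
    | zero =>
      refine ⟨Fin.elim0, fun η => ?_⟩
      rw [iInter_of_empty]
      simp
    | succ n ih =>
      obtain ⟨g, hg⟩ := ih
      set cell : (Fin n → Fin 2) → Set G := fun η => ⋂ k, (fun y => g k * y) ⁻¹' W (η k)
        with hcell
      have hcellopen : ∀ η, IsOpen (cell η) := fun η =>
        isOpen_iInter_of_finite fun k => (hWopen (η k)).preimage (continuous_mul_left (g k))
      -- bad set union
      set U : Set G := ⋃ (η : Fin n → Fin 2), ⋃ (i : Fin 2), ⋃ b ∈ {b ∈ Bas | z ∈ b},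
        {f | f ∈ F ∧ ∀ q ∈ cell η ∩ b, f * z⁻¹ * q ∉ W i} with hU
      have hU0 : μ U = 0 := by
        refine measure_iUnion_null fun η => measure_iUnion_null fun i => ?_
        refine (measure_biUnion_null_iff (hBasc.mono (sep_subset _ _))).2 fun b hb => ?_
        exact key (cell η) (hcellopen η) (hg η) i b hb.1 hb.2
      have hFdiff : μ (F \ U) ≠ 0 := by rwa [measure_diff_null hU0]
      obtain ⟨f, hfF, hfU⟩ := nonempty_of_measure_ne_zero hFdiff
      refine ⟨Fin.snoc g (f * z⁻¹), fun η' => ?_⟩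
      rw [mem_closure_iff]
      intro o ho hzo
      obtain ⟨b, hbB, hzb, hbo⟩ := hBas.mem_nhds_iff.1 (ho.mem_nhds hzo)
      have hfgood : ¬ (f ∈ F ∧ ∀ q ∈ cell (η' ∘ Fin.castSucc) ∩ b,
          f * z⁻¹ * q ∉ W (η' (Fin.last n))) := by
        intro hbad
        exact hfU (mem_iUnion.2 ⟨η' ∘ Fin.castSucc, mem_iUnion.2 ⟨η' (Fin.last n),
          mem_iUnion.2 ⟨b, mem_iUnion.2 ⟨⟨hbB, hzb⟩, hbad⟩⟩⟩⟩)
      push_neg at hfgood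
      obtain ⟨q, hqcb, hqW⟩ := hfgood hfF
      refine ⟨q, hbo hqcb.2, ?_⟩
      rw [mem_iInter]
      intro k
      refine Fin.lastCases ?_ ?_ k
      · simp only [mem_preimage, Fin.snoc_last]
        exact hqW
      · intro j
        have hq1 : q ∈ (fun y => g j * y) ⁻¹' W ((η' ∘ Fin.castSucc) j) :=
          mem_iInter.1 hqcb.1 j
        simpa [Fin.snoc_castSucc] using hq1
  -- conclude
  obtain ⟨g, hg⟩ := main (N + 1)
  have hx : ∀ η : Fin (N + 1) → Fin 2, ∃ x, x ∈ ⋂ k, (fun y => g k * y) ⁻¹' W (η k) :=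
    fun η => closure_nonempty_iff.1 ⟨z, hg η⟩
  choose x hxmem using hx
  have := hN (N + 1) g x (fun k η => by
    have := mem_iInter.1 (hxmem η) k
    simpa [hW] using this)
  omega
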